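/- Let Σ and S be d×d positive semi-definite Hermitian matrices and let 0 ≤ α ≤ (1/6)‖S‖_op⁻¹ (with S ≠ 0). Define S' = (I + α(Σ − S)) S (I + α(Σ − S)). Then λ_max(S') ≤ λ_max(S) (1 + α(λ_max(Σ) − λ_max(S)))². -/

import Mathlib

open Matrix
open scoped ComplexOrder
open scoped Matrix.Norms.L2Operator
open scoped MatrixOrder

/-- The operator (spectral) norm of a complex matrix, acting on Euclidean space. -/
noncomputable def opNorm {d : ℕ} (A : Matrix (Fin d) (Fin d) ℂ) : ℝ :=
  ‖(Matrix.toEuclideanCLM (𝕜 := ℂ) A : EuclideanSpace ℂ (Fin d) →L[ℂ] EuclideanSpace ℂ (Fin d))‖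

noncomputable instance matCStar9 {d : ℕ} : CStarAlgebra (Matrix (Fin d) (Fin d) ℂ) where

lemma opNorm_eq_norm9 {d : ℕ} (A : Matrix (Fin d) (Fin d) ℂ) : opNorm A = ‖A‖ := rfl

lemma herm_spectrum9 {d : ℕ} {A : Matrix (Fin d) (Fin d) ℂ} (hA : A.IsHermitian) :
    spectrum ℂ A = Set.range (fun i => (hA.eigenvalues i : ℂ)) := by
  conv_lhs => rw [hA.spectral_theorem, Unitary.conjStarAlgAut_apply, Unitary.spectrum_star_right_conjugate]
  rw [spectrum_diagonal]
  rfl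

lemma herm_sr9 {d : ℕ} {A : Matrix (Fin d) (Fin d) ℂ} (hA : A.IsHermitian) :
    spectralRadius ℂ A = (‖A‖₊ : ENNReal) := by
  have hsa : IsSelfAdjoint A := hA
  exact hsa.spectralRadius_eq_nnnorm

lemma norm_herm_le9 {d : ℕ} {A : Matrix (Fin d) (Fin d) ℂ} (hA : A.IsHermitian) {c : ℝ}
    (hc : 0 ≤ c) (h : ∀ z ∈ spectrum ℂ A, ‖z‖ ≤ c) : ‖A‖ ≤ c := by
  have h1 := herm_sr9 hA
  have h2 : spectralRadius ℂ A ≤ ENNReal.ofReal c := by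
    rw [spectralRadius]
    refine iSup₂_le fun k hk => ?_
    rw [← enorm_eq_nnnorm, ← ofReal_norm]
    exact ENNReal.ofReal_le_ofReal (h k hk)
  rw [h1] at h2
  have h3 : ‖A‖₊ ≤ c.toNNReal := by
    rw [ENNReal.ofReal] at h2
    exact_mod_cast h2
  calc ‖A‖ = (‖A‖₊ : ℝ) := rfl
    _ ≤ (c.toNNReal : ℝ) := by exact_mod_cast h3
    _ = c := Real.coe_toNNReal c hc

lemma eig_le_norm9 {d : ℕ} {A : Matrix (Fin d) (Fin d) ℂ} (hA : A.IsHermitian) (i : Fin d) :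
    hA.eigenvalues i ≤ ‖A‖ := by
  have h1 := herm_sr9 hA
  have hk : (hA.eigenvalues i : ℂ) ∈ spectrum ℂ A := by
    rw [herm_spectrum9 hA]; exact ⟨i, rfl⟩
  have h2 : (‖(hA.eigenvalues i : ℂ)‖₊ : ENNReal) ≤ spectralRadius ℂ A := by
    rw [spectralRadius]
    exact le_iSup₂ (f := fun k (_ : k ∈ spectrum ℂ A) => (‖k‖₊ : ENNReal)) _ hk
  rw [h1] at h2
  have h3 : ‖(hA.eigenvalues i : ℂ)‖ ≤ ‖A‖ := by exact_mod_cast h2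
  calc hA.eigenvalues i ≤ |hA.eigenvalues i| := le_abs_self _
    _ = ‖(hA.eigenvalues i : ℂ)‖ := by rw [Complex.norm_real, Real.norm_eq_abs]
    _ ≤ ‖A‖ := h3

lemma real_mono9 {α s t : ℝ} (hα : 0 ≤ α) (hs : 0 ≤ s) (hst : s ≤ t) (ht : α * t ≤ 1/3) :
    s * (1 - α*s)^2 ≤ t * (1 - α*t)^2 := by
  have hs' : 0 ≤ α * s := mul_nonneg hα hs
  have ht' : α * s ≤ α * t := mul_le_mul_of_nonneg_left hst hα
  have h3 : α*s*(α*t) ≤ ((α*s+α*t)/2)^2 := by nlinarith [sq_nonneg (α*s - α*t)]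
  have h4 : ((α*s+α*t)/2)^2 ≤ (1-(α*s+α*t))^2 := by
    have h2 : (α*s+α*t)/2 ≤ 1-(α*s+α*t) := by linarith
    have h5 : (0:ℝ) ≤ (α*s+α*t)/2 := by linarith
    exact pow_le_pow_left₀ h5 h2 2
  have hcore : 0 ≤ (1-α*s-α*t)^2 - α*s*(α*t) := by nlinarith
  nlinarith [mul_nonneg (sub_nonneg.2 hst) hcore]

lemma conj_diag9 {d : ℕ} (S : Matrix (Fin d) (Fin d) ℂ) (hS : S.PosSemidef) (α : ℝ) :
    S - (2*(α:ℂ)) • (S*S) + ((α:ℂ)^2) • (S*(S*S)) =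
      (hS.1.eigenvectorUnitary : Matrix (Fin d) (Fin d) ℂ) *
        diagonal (fun i => ((hS.1.eigenvalues i * (1 - α * hS.1.eigenvalues i)^2 : ℝ) : ℂ)) *
        star (hS.1.eigenvectorUnitary : Matrix (Fin d) (Fin d) ℂ) := by
  set U : Matrix (Fin d) (Fin d) ℂ := (hS.1.eigenvectorUnitary : Matrix (Fin d) (Fin d) ℂ) with hUdef
  have hU : star U * U = 1 := mem_unitaryGroup_iff'.mp hS.1.eigenvectorUnitary.2
  set D : Matrix (Fin d) (Fin d) ℂ := diagonal (RCLike.ofReal ∘ hS.1.eigenvalues) with hDdef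
  have hsp : S = U * D * star U := hS.1.spectral_theorem
  have key : ∀ E F : Matrix (Fin d) (Fin d) ℂ,
      (U*E*star U) * (U*F*star U) = U*(E*F)*star U := by
    intro E F
    simp only [mul_assoc]
    rw [show star U * (U * (F * star U)) = F * star U by rw [← mul_assoc, hU, one_mul]]
  have h2 : S*S = U * (D*D) * star U := by rw [hsp, key]
  have h3 : S*(S*S) = U*(D*(D*D))*star U := by rw [h2, hsp, key]
  have hdiag : D - (2*(α:ℂ))•(D*D) + ((α:ℂ)^2)•(D*(D*D)) =
      diagonal (fun i => ((hS.1.eigenvalues i * (1 - α * hS.1.eigenvalues i)^2 : ℝ) : ℂ)) := by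
    ext i j
    simp only [hDdef, diagonal_mul_diagonal, Matrix.sub_apply, Matrix.add_apply,
      Matrix.smul_apply, diagonal_apply, Function.comp_apply, Pi.mul_apply, smul_eq_mul]
    by_cases h : i = j
    · simp only [h, if_pos rfl]
      simp only [show (RCLike.ofReal : ℝ → ℂ) = Complex.ofReal from rfl]
      push_cast
      ring
    · simp [h]
  calc S - (2*(α:ℂ)) • (S*S) + ((α:ℂ)^2) • (S*(S*S))
      = U * (D - (2*(α:ℂ))•(D*D) + ((α:ℂ)^2)•(D*(D*D))) * star U := by
        rw [h3, h2]
        conv_lhs => rw [hsp]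
        simp only [mul_sub, sub_mul, mul_add, add_mul, mul_smul_comm, smul_mul_assoc]
    _ = _ := by rw [hdiag]

/-- Let `T` (the target `Σ`) and `S` be PSD Hermitian matrices and `0 ≤ α ≤ (1/6)‖S‖_op⁻¹`
with `S ≠ 0`. For `S' = (I + α(T − S)) S (I + α(T − S))`,
`λ_max(S') ≤ λ_max(S) (1 + α(λ_max(T) − λ_max(S)))²`. -/
theorem stmt9 {d : ℕ} (T S : Matrix (Fin d) (Fin d) ℂ)
    (hT : T.PosSemidef) (hS : S.PosSemidef) (hS0 : S ≠ 0)
    (α : ℝ) (hα0 : 0 ≤ α) (hα : α ≤ (1 / 6) * (opNorm S)⁻¹)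
    (hS' : ((1 + (α : ℂ) • (T - S)) * S * (1 + (α : ℂ) • (T - S))).IsHermitian) :
    (⨆ k, hS'.eigenvalues k) ≤
      (⨆ k, hS.1.eigenvalues k) *
        (1 + α * ((⨆ k, hT.1.eigenvalues k) - (⨆ k, hS.1.eigenvalues k))) ^ 2 := by
  -- nonempty index type
  have hd : Nonempty (Fin d) := by
    rcases Nat.eq_zero_or_pos d with h | h
    · exfalso
      apply hS0
      ext i j
      exact absurd i.2 (by omega)
    · exact ⟨⟨0, h⟩⟩
  set L : ℝ := ⨆ k, hS.1.eigenvalues k with hLdef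
  set M : ℝ := ⨆ k, hT.1.eigenvalues k with hMdef
  -- norms equal sups of eigenvalues
  have hSnorm : ‖S‖ = L := by
    apply le_antisymm
    · refine norm_herm_le9 hS.1 ?_ ?_
      · exact le_ciSup_of_le (Set.Finite.bddAbove (Set.finite_range _)) hd.some
          (hS.eigenvalues_nonneg hd.some)
      · rw [herm_spectrum9 hS.1]
        rintro z ⟨i, rfl⟩
        rw [Complex.norm_real, Real.norm_eq_abs, abs_of_nonneg (hS.eigenvalues_nonneg i)]
        exact le_ciSup (Set.Finite.bddAbove (Set.finite_range _)) i
    · exact ciSup_le fun i => eig_le_norm9 hS.1 i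
  have hTnorm : ‖T‖ = M := by
    apply le_antisymm
    · refine norm_herm_le9 hT.1 ?_ ?_
      · exact le_ciSup_of_le (Set.Finite.bddAbove (Set.finite_range _)) hd.some
          (hT.eigenvalues_nonneg hd.some)
      · rw [herm_spectrum9 hT.1]
        rintro z ⟨i, rfl⟩
        rw [Complex.norm_real, Real.norm_eq_abs, abs_of_nonneg (hT.eigenvalues_nonneg i)]
        exact le_ciSup (Set.Finite.bddAbove (Set.finite_range _)) i
    · exact ciSup_le fun i => eig_le_norm9 hT.1 i
  have hL0 : 0 < L := by
    rw [← hSnorm]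
    exact norm_pos_iff.mpr hS0
  have hM0 : 0 ≤ M := le_trans (hT.eigenvalues_nonneg hd.some)
    (le_ciSup (Set.Finite.bddAbove (Set.finite_range _)) hd.some)
  have hαL : α * L ≤ 1/6 := by
    rw [opNorm_eq_norm9, hSnorm] at hα
    calc α * L ≤ (1/6 * L⁻¹) * L := mul_le_mul_of_nonneg_right hα hL0.le
      _ = 1/6 := by rw [mul_assoc, inv_mul_cancel₀ hL0.ne', mul_one]
  -- the square root of S
  set P : Matrix (Fin d) (Fin d) ℂ := CFC.sqrt S with hPdef
  have hPP : P * P = S := CFC.sqrt_mul_sqrt_self S hS.nonneg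
  have hPH : Pᴴ = P := (CFC.sqrt_nonneg S).isSelfAdjoint
  have hPstar : star P = P := hPH
  -- B
  set B : Matrix (Fin d) (Fin d) ℂ := 1 + (α : ℂ) • (T - S) with hBdef
  have hBstar : star B = B := by
    simp only [hBdef, star_add, star_one, star_smul, star_sub, Matrix.star_eq_conjTranspose,
      hT.1.eq, hS.1.eq, Complex.star_def, Complex.conj_ofReal]
  -- X = P - α P S
  set X : Matrix (Fin d) (Fin d) ℂ := P - (α:ℂ) • (P * S) with hXdef
  have hXstar : star X = P - (α:ℂ) • (S * P) := by
    simp only [hXdef, star_sub, star_smul, Matrix.star_eq_conjTranspose, conjTranspose_mul,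
      hS.1.eq, hPH, Complex.star_def, Complex.conj_ofReal]
  have hXX : star X * X = S - (2*(α:ℂ)) • (S*S) + ((α:ℂ)^2) • (S*(S*S)) := by
    rw [hXstar, hXdef]
    simp only [mul_sub, sub_mul, smul_mul_assoc, mul_smul_comm, smul_smul, smul_sub]
    simp only [mul_assoc]
    rw [show P * (P * S) = S * S by rw [← mul_assoc, hPP]]
    rw [hPP]
    module
  -- norm of X
  have hA2 : ‖star X * X‖ ≤ L * (1 - α*L)^2 := by
    rw [hXX, conj_diag9 S hS α]
    have hherm : ((hS.1.eigenvectorUnitary : Matrix (Fin d) (Fin d) ℂ) *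
        diagonal (fun i => ((hS.1.eigenvalues i * (1 - α * hS.1.eigenvalues i)^2 : ℝ) : ℂ)) *
        star (hS.1.eigenvectorUnitary : Matrix (Fin d) (Fin d) ℂ)).IsHermitian := by
      rw [← conj_diag9 S hS α, ← hXX, Matrix.star_eq_conjTranspose]
      exact posSemidef_conjTranspose_mul_self X |>.1
    refine norm_herm_le9 hherm ?_ ?_
    · have : (0:ℝ) ≤ (1 - α*L)^2 := sq_nonneg _
      positivity
    · rw [Unitary.spectrum_star_right_conjugate, spectrum_diagonal]
      rintro z ⟨i, rfl⟩
      have hei0 : 0 ≤ hS.1.eigenvalues i := hS.eigenvalues_nonneg i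
      have heiL : hS.1.eigenvalues i ≤ L :=
        le_ciSup (Set.Finite.bddAbove (Set.finite_range _)) i
      have hmono := real_mono9 hα0 hei0 heiL (by linarith)
      have hnn : 0 ≤ hS.1.eigenvalues i * (1 - α * hS.1.eigenvalues i)^2 :=
        mul_nonneg hei0 (sq_nonneg _)
      rw [Complex.norm_real, Real.norm_eq_abs, abs_of_nonneg hnn]
      exact hmono
  set c : ℝ := Real.sqrt L with hcdef
  have hc0 : 0 ≤ c := Real.sqrt_nonneg L
  have hcc : c * c = L := Real.mul_self_sqrt hL0.le
  have hXle : ‖X‖ ≤ c * (1 - α*L) := by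
    have h1 : ‖X‖ * ‖X‖ = ‖star X * X‖ := (CStarRing.norm_star_mul_self (x := X)).symm
    have h2 : ‖X‖ * ‖X‖ ≤ (c * (1 - α*L)) * (c * (1 - α*L)) := by
      rw [h1]
      calc ‖star X * X‖ ≤ L * (1 - α*L)^2 := hA2
        _ = (c * (1 - α*L)) * (c * (1 - α*L)) := by rw [← hcc]; ring
    have h3 : 0 ≤ c * (1 - α*L) := mul_nonneg hc0 (by linarith)
    nlinarith [norm_nonneg X]
  -- norm of P
  have hPnorm : ‖P‖ = c := by
    have h1 : ‖P‖ * ‖P‖ = ‖S‖ := by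
      rw [← hPP]
      nth_rewrite 3 [← hPstar]
      exact (CStarRing.norm_star_mul_self (x := P)).symm
    have := Real.sqrt_mul_self (norm_nonneg P)
    rw [h1, hSnorm] at this
    rw [hcdef, ← this]
  -- splitting P * B
  have hsplit : P * B = X + (α:ℂ) • (P * T) := by
    rw [hBdef, hXdef]
    simp only [mul_add, mul_one, mul_sub, mul_smul_comm, smul_sub]
    abel
  have hPB : ‖P * B‖ ≤ c * (1 + α * (M - L)) := by
    calc ‖P * B‖ = ‖X + (α:ℂ) • (P * T)‖ := by rw [hsplit]
      _ ≤ ‖X‖ + ‖(α:ℂ) • (P * T)‖ := norm_add_le _ _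
      _ = ‖X‖ + α * ‖P * T‖ := by
          rw [norm_smul]
          congr 1
          congr 1
          rw [Complex.norm_real, Real.norm_eq_abs, abs_of_nonneg hα0]
      _ ≤ c * (1 - α*L) + α * (‖P‖ * ‖T‖) := by
          gcongr
          exact norm_mul_le _ _
      _ = c * (1 - α*L) + α * (c * M) := by rw [hPnorm, hTnorm]
      _ = c * (1 + α * (M - L)) := by ring
  -- the matrix S'
  have hS'eq : (1 + (α : ℂ) • (T - S)) * S * (1 + (α : ℂ) • (T - S)) = star (P*B) * (P*B) := by
    have h1 : star (P*B) * (P*B) = B * S * B := by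
      rw [StarMul.star_mul, hBstar, hPstar, ← hPP]
      simp only [mul_assoc]
    rw [h1]
  have hβ0 : 0 ≤ 1 + α * (M - L) := by
    have : α * M ≥ 0 := mul_nonneg hα0 hM0
    nlinarith
  have hnormS' : ‖(1 + (α : ℂ) • (T - S)) * S * (1 + (α : ℂ) • (T - S))‖ ≤
      L * (1 + α * (M - L))^2 := by
    rw [hS'eq, CStarRing.norm_star_mul_self (x := P*B)]
    calc ‖P*B‖ * ‖P*B‖ ≤ (c * (1 + α * (M - L))) * (c * (1 + α * (M - L))) := by
          apply mul_le_mul hPB hPB (norm_nonneg _) (mul_nonneg hc0 hβ0)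
      _ = L * (1 + α * (M - L))^2 := by rw [← hcc]; ring
  calc (⨆ k, hS'.eigenvalues k) ≤ ‖(1 + (α : ℂ) • (T - S)) * S * (1 + (α : ℂ) • (T - S))‖ :=
        ciSup_le fun k => eig_le_norm9 hS' k
    _ ≤ L * (1 + α * (M - L))^2 := hnormS'
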